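/- arXiv:1708.00887 — 6 statements merged into one kernel-verified Lean document; each statement's English description precedes it below -/
import Mathlib

section
/- If a(λ) = λ⁴ + a₁λ³ + a₂λ² + conj(a₁)λ + 1 equals λ⁻¹·det(ζ) for some ζ ∈ 𝒫₂, then λ⁻²·a(λ) ≥ 0 (is real and nonnegative) for all λ on the unit circle. -/
open Complex

/-- For `a ∈ ℳ₂` (coming from a potential with parameters `α, β, γ`) and `λ` on
the unit circle, `λ⁻²·a(λ)` is a nonnegative real number. -/
theorem stmt_2 (α β : ℂ) (γ : ℝ) (hγ : 0 < γ) (lam : ℂ)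
    (hlam : ‖lam‖ = 1) :
    ∃ r : ℝ, 0 ≤ r ∧
      lam⁻¹ ^ 2 * (lam ^ 4
        + (-((starRingEnd ℂ) α) ^ 2 - β * (γ : ℂ)⁻¹ - (starRingEnd ℂ) β * (γ : ℂ)) * lam ^ 3
        + (2 * α * (starRingEnd ℂ) α + β * (starRingEnd ℂ) β + (γ : ℂ) ^ 2 + (γ : ℂ)⁻¹ ^ 2) * lam ^ 2
        + (starRingEnd ℂ) (-((starRingEnd ℂ) α) ^ 2 - β * (γ : ℂ)⁻¹ - (starRingEnd ℂ) β * (γ : ℂ)) * lam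
        + 1) = (r : ℂ) := by
  obtain ⟨μ, hμ⟩ := IsAlgClosed.exists_pow_nat_eq lam (n := 2) two_pos
  have hμabs : ‖μ‖ = 1 := by
    have h2 : ‖μ‖ ^ 2 = 1 := by rw [← norm_pow, hμ, hlam]
    nlinarith [norm_nonneg μ]
  have hγ0 : (γ : ℂ) ≠ 0 := by exact_mod_cast hγ.ne'
  have hgd : (γ : ℂ) * (γ : ℂ)⁻¹ = 1 := mul_inv_cancel₀ hγ0
  have hmc : μ * (starRingEnd ℂ) μ = 1 := by
    rw [Complex.mul_conj]
    norm_cast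
    rw [← Complex.sq_norm, hμabs]; norm_num
  have hlaminv : lam⁻¹ = ((starRingEnd ℂ) μ) ^ 2 := by
    rw [← hμ]
    refine inv_eq_of_mul_eq_one_right ?_
    linear_combination (μ * (starRingEnd ℂ) μ + 1) * hmc
  refine ⟨Complex.normSq (α * (starRingEnd ℂ) μ - (starRingEnd ℂ) α * μ)
      + Complex.normSq (β * (starRingEnd ℂ) μ - (γ : ℂ)⁻¹ * ((starRingEnd ℂ) μ) ^ 3 - (γ : ℂ) * μ),
    add_nonneg (Complex.normSq_nonneg _) (Complex.normSq_nonneg _), ?_⟩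
  have key : ((Complex.normSq (α * (starRingEnd ℂ) μ - (starRingEnd ℂ) α * μ)
      + Complex.normSq (β * (starRingEnd ℂ) μ - (γ : ℂ)⁻¹ * ((starRingEnd ℂ) μ) ^ 3 - (γ : ℂ) * μ) : ℝ) : ℂ)
      = -(α * (starRingEnd ℂ) μ - (starRingEnd ℂ) α * μ) ^ 2
        + (β * (starRingEnd ℂ) μ - (γ : ℂ)⁻¹ * ((starRingEnd ℂ) μ) ^ 3 - (γ : ℂ) * μ)
          * ((starRingEnd ℂ) β * μ - (γ : ℂ)⁻¹ * μ ^ 3 - (γ : ℂ) * (starRingEnd ℂ) μ) := by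
    push_cast
    rw [Complex.normSq_eq_conj_mul_self, Complex.normSq_eq_conj_mul_self]
    simp only [map_sub, map_mul, map_pow, Complex.conj_conj, Complex.conj_ofReal, map_inv₀]
    ring
  rw [key, hlaminv, ← hμ]
  simp only [map_sub, map_neg, map_mul, map_pow, Complex.conj_conj, Complex.conj_ofReal, map_inv₀]
  set c := (starRingEnd ℂ) μ
  set A := (starRingEnd ℂ) α
  set B := (starRingEnd ℂ) β
  set d := (γ : ℂ)⁻¹
  linear_combination (-1 * c ^ 2 * α ^ 2 + -1 * c ^ 2 * (γ:ℂ) * β + μ * c * β * B + 2 * μ * c * α * A + μ * c * (γ:ℂ) ^ 2 + -1 * μ * c ^ 3 * α ^ 2 + -1 * μ * c ^ 3 * d * B + -1 * μ * c ^ 3 * (γ:ℂ) * β + -1 * μ ^ 2 * A ^ 2 + -1 * μ ^ 2 * (γ:ℂ) * B + μ ^ 2 * c ^ 2 * β * B + 2 * μ ^ 2 * c ^ 2 * α * A + μ ^ 2 * c ^ 2 * (γ:ℂ) ^ 2 + -1 * μ ^ 3 * c * A ^ 2 + -1 * μ ^ 3 * c * d * β + -1 * μ ^ 3 * c * (γ:ℂ)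 * B + μ ^ 3 * c ^ 3 * β * B + 2 * μ ^ 3 * c ^ 3 * α * A + μ ^ 3 * c ^ 3 * d ^ 2 + μ ^ 3 * c ^ 3 * (γ:ℂ) ^ 2 + μ ^ 4 + -1 * μ ^ 4 * c ^ 2 * A ^ 2 + -1 * μ ^ 4 * c ^ 2 * d * β + -1 * μ ^ 4 * c ^ 2 * (γ:ℂ) * B + μ ^ 5 * c + -1 * μ ^ 5 * c ^ 3 * A ^ 2 + -1 * μ ^ 5 * c ^ 3 * d * β + -1 * μ ^ 5 * c ^ 3 * (γ:ℂ) * B + μ ^ 6 * c ^ 2 + μ ^ 7 * c ^ 3) * hmc + (-1 * c ^ 4 + -1 * μ ^ 4) * hgd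
end

section
/- For each a ∈ ℳ₂ the isospectral set I(a) = {ζ ∈ 𝒫₂ | det ζ = λ·a(λ)}, identified with the set of parameters (α, β, γ) ∈ ℂ × ℂ × ℝ⁺ satisfying a₁ = -conj(α)² - βγ⁻¹ - conj(β)γ and a₂ = 2|α|² + |β|² + γ² + γ⁻², is a compact subset of ℂ × ℂ × ℝ⁺. In particular, on I(a) both γ and γ⁻¹ are bounded. -/
open Complex

/-- The isospectral set `I(a)`, viewed as a set of parameters
`(α, β, γ) ∈ ℂ × ℂ × ℝ⁺`, is compact; in particular `γ` and `γ⁻¹` are bounded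
on it. -/
theorem stmt_5 (a₁ : ℂ) (a₂ : ℝ) :
    IsCompact {p : ℂ × ℂ × ℝ | 0 < p.2.2 ∧
      a₁ = -((starRingEnd ℂ) p.1) ^ 2 - p.2.1 * (p.2.2 : ℂ)⁻¹
            - (starRingEnd ℂ) p.2.1 * (p.2.2 : ℂ) ∧
      (a₂ : ℝ) = 2 * ‖p.1‖ ^ 2 + ‖p.2.1‖ ^ 2
            + p.2.2 ^ 2 + p.2.2⁻¹ ^ 2} ∧
    ∃ M : ℝ, ∀ p : ℂ × ℂ × ℝ,
      p ∈ {p : ℂ × ℂ × ℝ | 0 < p.2.2 ∧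
        a₁ = -((starRingEnd ℂ) p.1) ^ 2 - p.2.1 * (p.2.2 : ℂ)⁻¹
              - (starRingEnd ℂ) p.2.1 * (p.2.2 : ℂ) ∧
        (a₂ : ℝ) = 2 * ‖p.1‖ ^ 2 + ‖p.2.1‖ ^ 2
              + p.2.2 ^ 2 + p.2.2⁻¹ ^ 2} →
      p.2.2 ≤ M ∧ p.2.2⁻¹ ≤ M := by
  set S : Set (ℂ × ℂ × ℝ) := {p : ℂ × ℂ × ℝ | 0 < p.2.2 ∧
      a₁ = -((starRingEnd ℂ) p.1) ^ 2 - p.2.1 * (p.2.2 : ℂ)⁻¹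
            - (starRingEnd ℂ) p.2.1 * (p.2.2 : ℂ) ∧
      (a₂ : ℝ) = 2 * ‖p.1‖ ^ 2 + ‖p.2.1‖ ^ 2
            + p.2.2 ^ 2 + p.2.2⁻¹ ^ 2} with hS
  set R : ℝ := Real.sqrt (max a₂ 2) with hRdef
  have hmax : (0:ℝ) ≤ max a₂ 2 := le_trans (by norm_num) (le_max_right _ _)
  have hR2 : R ^ 2 = max a₂ 2 := Real.sq_sqrt hmax
  have hRpos : 0 < R := Real.sqrt_pos.2 (lt_of_lt_of_le (by norm_num) (le_max_right a₂ 2))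
  -- key bounds on S
  have key : ∀ p ∈ S, ‖p.1‖ ≤ R ∧ ‖p.2.1‖ ≤ R ∧
      p.2.2 ≤ R ∧ R⁻¹ ≤ p.2.2 ∧ p.2.2⁻¹ ≤ R := by
    intro p hp
    obtain ⟨hg, _, h2⟩ := hp
    have hc : 0 ≤ ‖p.1‖ := norm_nonneg _
    have hb : 0 ≤ ‖p.2.1‖ := norm_nonneg _
    have hgi : 0 < p.2.2⁻¹ := inv_pos.2 hg
    have ha : a₂ ≤ max a₂ 2 := le_max_left _ _
    have h2' := h2
    have hA : ‖p.1‖ ≤ R := by nlinarith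
    have hB : ‖p.2.1‖ ≤ R := by nlinarith
    have hC : p.2.2 ≤ R := by nlinarith
    have hE : p.2.2⁻¹ ≤ R := by nlinarith
    have hD : R⁻¹ ≤ p.2.2 := by
      have hmul : p.2.2 * p.2.2⁻¹ = 1 := mul_inv_cancel₀ (ne_of_gt hg)
      rw [inv_le_iff_one_le_mul₀ hRpos]
      nlinarith
    exact ⟨hA, hB, hC, hD, hE⟩
  have hsub : S ⊆ Metric.closedBall (0 : ℂ × ℂ × ℝ) R := by
    intro p hp
    obtain ⟨hA, hB, hC, hD, _⟩ := key p hp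
    have hg : 0 < p.2.2 := hp.1
    simp only [Metric.mem_closedBall, dist_zero_right, Prod.norm_def]
    simp only [max_le_iff, Real.norm_eq_abs]
    exact ⟨hA, hB, by rwa [abs_of_pos hg]⟩
  -- closedness
  have hSeq : S = {p : ℂ × ℂ × ℝ | R⁻¹ ≤ p.2.2} ∩
      ((fun p : ℂ × ℂ × ℝ => (-((starRingEnd ℂ) p.1) ^ 2 - p.2.1 * (p.2.2 : ℂ)⁻¹
            - (starRingEnd ℂ) p.2.1 * (p.2.2 : ℂ),
        2 * ‖p.1‖ ^ 2 + ‖p.2.1‖ ^ 2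
            + p.2.2 ^ 2 + p.2.2⁻¹ ^ 2)) ⁻¹' {(a₁, a₂)}) := by
    ext p
    constructor
    · intro hp
      exact ⟨(key p hp).2.2.2.1, by
        simp only [Set.mem_preimage, Set.mem_singleton_iff, Prod.mk.injEq]
        exact ⟨hp.2.1.symm, hp.2.2.symm⟩⟩
    · rintro ⟨h1, h2⟩
      simp only [Set.mem_preimage, Set.mem_singleton_iff, Prod.mk.injEq] at h2
      exact ⟨lt_of_lt_of_le (inv_pos.2 hRpos) h1, h2.1.symm, h2.2.symm⟩
  have hγ : Continuous (fun p : ℂ × ℂ × ℝ => p.2.2) := continuous_snd.comp continuous_snd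
  have hclosedhalf : IsClosed {p : ℂ × ℂ × ℝ | R⁻¹ ≤ p.2.2} :=
    isClosed_le continuous_const hγ
  have hne : ∀ p ∈ {p : ℂ × ℂ × ℝ | R⁻¹ ≤ p.2.2}, p.2.2 ≠ 0 := fun p hp =>
    ne_of_gt (lt_of_lt_of_le (inv_pos.2 hRpos) hp)
  have hγC : Continuous (fun p : ℂ × ℂ × ℝ => (p.2.2 : ℂ)) :=
    Complex.continuous_ofReal.comp hγ
  have hinvC : ContinuousOn (fun p : ℂ × ℂ × ℝ => ((p.2.2 : ℂ))⁻¹)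
      {p : ℂ × ℂ × ℝ | R⁻¹ ≤ p.2.2} :=
    hγC.continuousOn.inv₀ fun p hp => Complex.ofReal_ne_zero.2 (hne p hp)
  have hinvR : ContinuousOn (fun p : ℂ × ℂ × ℝ => p.2.2⁻¹)
      {p : ℂ × ℂ × ℝ | R⁻¹ ≤ p.2.2} := hγ.continuousOn.inv₀ hne
  have hcont : ContinuousOn (fun p : ℂ × ℂ × ℝ =>
      (-((starRingEnd ℂ) p.1) ^ 2 - p.2.1 * (p.2.2 : ℂ)⁻¹
            - (starRingEnd ℂ) p.2.1 * (p.2.2 : ℂ),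
        2 * ‖p.1‖ ^ 2 + ‖p.2.1‖ ^ 2
            + p.2.2 ^ 2 + p.2.2⁻¹ ^ 2)) {p : ℂ × ℂ × ℝ | R⁻¹ ≤ p.2.2} := by
    apply ContinuousOn.prodMk
    · exact ((((continuous_star.comp continuous_fst).pow 2).neg.continuousOn.sub
        ((continuous_fst.comp continuous_snd).continuousOn.mul hinvC)).sub
        (((continuous_star.comp (continuous_fst.comp continuous_snd)).continuousOn).mul
          hγC.continuousOn))
    · exact ((((continuous_const.mul
        ((continuous_norm.comp continuous_fst).pow 2)).add
        ((continuous_norm.comp (continuous_fst.comp continuous_snd)).pow 2)).add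
        (hγ.pow 2)).continuousOn).add (hinvR.pow 2)
  have hclosed : IsClosed S := by
    rw [hSeq]
    exact hcont.preimage_isClosed_of_isClosed hclosedhalf isClosed_singleton
  refine ⟨IsCompact.of_isClosed_subset (isCompact_closedBall _ _) hclosed hsub, R, ?_⟩
  intro p hp
  exact ⟨(key p hp).2.2.1, (key p hp).2.2.2.2⟩
end

section
/- With B(λ) = -γ⁻¹ + βλ - γλ² and C(λ) = γ - conj(β)λ + γ⁻¹λ², the determinant of the 3×3 matrix [[-γ⁻¹, -γ, βγ⁻² - conj(β)],[-γ, -γ⁻¹, conj(β)γ⁻² - β],[conj(β), β, 2(γ - γ⁻³)]] equals -2γ⁻¹ times the resultant of B and C. -/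
open Complex Matrix

set_option maxHeartbeats 1000000 in
/-- The determinant of the 3×3 matrix appearing in the Jacobian computation
equals `-2γ⁻¹` times the resultant of `B` and `C` (the determinant of the
Sylvester matrix). -/
theorem stmt_8 (β : ℂ) (γ : ℝ) (hγ : 0 < γ) :
    Matrix.det
      !![-(γ : ℂ)⁻¹, -(γ : ℂ), β * (γ : ℂ)⁻¹ ^ 2 - (starRingEnd ℂ) β;
         -(γ : ℂ), -(γ : ℂ)⁻¹, (starRingEnd ℂ) β * (γ : ℂ)⁻¹ ^ 2 - β;
         (starRingEnd ℂ) β, β, 2 * ((γ : ℂ) - (γ : ℂ)⁻¹ ^ 3)] =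
    -2 * (γ : ℂ)⁻¹ *
      Matrix.det
        !![-(γ : ℂ), β, -(γ : ℂ)⁻¹, 0;
           0, -(γ : ℂ), β, -(γ : ℂ)⁻¹;
           (γ : ℂ)⁻¹, -(starRingEnd ℂ) β, (γ : ℂ), 0;
           0, (γ : ℂ)⁻¹, -(starRingEnd ℂ) β, (γ : ℂ)] := by
  have hg : (γ:ℂ) ≠ 0 := by exact_mod_cast hγ.ne'
  have hu : (γ:ℂ) * (γ:ℂ)⁻¹ = 1 := mul_inv_cancel₀ hg
  have e1 : (Fin.succAbove 1 2 : Fin 4) = 3 := rfl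
  have e2 : (Fin.succAbove 2 2 : Fin 4) = 3 := rfl
  simp [Matrix.det_succ_row_zero, Fin.sum_univ_succ, e1, e2]
  linear_combination ((γ:ℂ)⁻¹*((starRingEnd ℂ) β)^2 + (γ:ℂ)⁻¹*β^2 - 2*(γ:ℂ)*β*((starRingEnd ℂ) β)
    - 2*(γ:ℂ)*((γ:ℂ)⁻¹)^2 + 2*(γ:ℂ)^3) * hu
end

section
/- Two quadratic polynomials B(λ) = -γ⁻¹ + βλ - γλ² and C(λ) = γ - conj(β)λ + γ⁻¹λ² (with β ∈ ℂ, γ > 0) have a common complex root if and only if β² + conj(β)² - |β|²(γ² + γ⁻²) + γ⁴ + γ⁻⁴ - 2 = 0. -/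
open Complex

/-- `B(λ) = -γ⁻¹ + βλ - γλ²` and `C(λ) = γ - conj(β)λ + γ⁻¹λ²` have a common
complex root iff `β² + conj(β)² - |β|²(γ² + γ⁻²) + γ⁴ + γ⁻⁴ - 2 = 0`. -/
theorem stmt_9 (β : ℂ) (γ : ℝ) (hγ : 0 < γ) :
    (∃ lam : ℂ,
        -(γ : ℂ)⁻¹ + β * lam - (γ : ℂ) * lam ^ 2 = 0 ∧
        (γ : ℂ) - (starRingEnd ℂ) β * lam + (γ : ℂ)⁻¹ * lam ^ 2 = 0) ↔
    β ^ 2 + ((starRingEnd ℂ) β) ^ 2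
      - β * (starRingEnd ℂ) β * ((γ : ℂ) ^ 2 + (γ : ℂ)⁻¹ ^ 2)
      + (γ : ℂ) ^ 4 + (γ : ℂ)⁻¹ ^ 4 - 2 = 0 := by
  set g : ℂ := (γ : ℂ) with hgdef
  set b : ℂ := (starRingEnd ℂ) β with hbdef
  have hg : g ≠ 0 := by
    simp [hgdef, Complex.ofReal_ne_zero]
    exact ne_of_gt hγ
  have hgi : g * g⁻¹ = 1 := mul_inv_cancel₀ hg
  constructor
  · rintro ⟨l, h1, h2⟩
    have h1' : -1 + β * g * l - g ^ 2 * l ^ 2 = 0 := by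
      linear_combination g * h1 + hgi
    have h2' : g ^ 2 - b * g * l + l ^ 2 = 0 := by
      linear_combination g * h2 - l ^ 2 * hgi
    have hR' : β ^ 2 * g ^ 4 + b ^ 2 * g ^ 4 - β * b * (g ^ 6 + g ^ 2)
        + g ^ 8 + 1 - 2 * g ^ 4 = 0 := by
      linear_combination
        (g ^ 2 * b * (β - g ^ 2 * b) + g ^ 4 - 1 - g * (β - g ^ 2 * b) * l) * h1'
        + (g ^ 6 - g ^ 2 + g ^ 2 * β * (β - g ^ 2 * b)
            - g ^ 3 * (β - g ^ 2 * b) * l) * h2'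
    linear_combination (g⁻¹) ^ 4 * hR'
      + (β * b * g⁻¹ ^ 2 * (g * g⁻¹ + 1)
          - (β ^ 2 + b ^ 2 - β * b * g ^ 2 + g ^ 4 - 2) * (g * g⁻¹ + 1) *
              ((g * g⁻¹) ^ 2 + 1)) * hgi
  · intro hR
    have hR' : β ^ 2 * g ^ 4 + b ^ 2 * g ^ 4 - β * b * (g ^ 6 + g ^ 2)
        + g ^ 8 + 1 - 2 * g ^ 4 = 0 := by
      linear_combination g ^ 4 * hR
        - (g * g⁻¹ + 1) * (1 + g ^ 2 * g⁻¹ ^ 2 - β * b * g ^ 2) * hgi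
    by_cases hD : β - g ^ 2 * b = 0
    · -- degenerate case: β = g² b, and then g⁴ = 1, so γ = 1 and β real
      have hβ : β = g ^ 2 * b := by linear_combination hD
      have hg4 : (g ^ 4 - 1) ^ 2 = 0 := by
        linear_combination hR' - (g ^ 4 * β - g ^ 2 * b) * hD
      have hg4' : g ^ 4 = 1 := by
        have := pow_eq_zero_iff (n := 2) (by norm_num) |>.mp hg4
        linear_combination this
      have hγ1 : γ = 1 := by
        have : (γ : ℂ) ^ 4 = 1 := hg4'
        have h4 : γ ^ 4 = 1 := by exact_mod_cast this
        nlinarith [sq_nonneg (γ - 1), sq_nonneg (γ + 1), sq_nonneg (γ ^ 2 - 1)]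
      have hg1 : g = 1 := by rw [hgdef, hγ1]; norm_num
      have hβb : β = b := by rw [hβ, hg1]; ring
      obtain ⟨z, hz⟩ := Complex.isAlgClosed.exists_pow_nat_eq (β ^ 2 - 4) (n := 2) (by norm_num)
      refine ⟨(β + z) / 2, ?_, ?_⟩
      · rw [hg1]; norm_num
        linear_combination (-1/4 : ℂ) * hz
      · rw [hg1, ← hβb]; norm_num
        linear_combination (1/4 : ℂ) * hz
    · -- main case: common root lam = (1 - g⁴)/(g (β - g² b))
      refine ⟨(1 - g ^ 4) / (g * (β - g ^ 2 * b)), ?_, ?_⟩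
      · rw [div_pow]
        field_simp
        ring_nf
        linear_combination (-1 : ℂ) * hR'
      · rw [div_pow]
        field_simp
        ring_nf
        linear_combination hR'
end

section
/- If a(λ) = (λ - λ₁)²(λ - conj(λ₁))² with λ₁ on the unit circle and λ₁ ∉ ℝ, then the isospectral set I(a) contains exactly one element, namely the off-diagonal potential ζ(λ) = [[0, -1],[λ, 0]]·(λ - λ₁)(λ - conj(λ₁)) corresponding to (α, β, γ) = (0, λ₁ + conj(λ₁), 1). -/
open Complex Matrix

set_option maxHeartbeats 1600000 in
/-- For `a(λ) = (λ-l₁)²(λ-conj l₁)²` with `l₁` unital and non-real, the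
isospectral set `I(a)` consists of exactly one point, the off-diagonal potential
with `(α, β, γ) = (0, l₁ + conj l₁, 1)`. -/
theorem stmt_10 (l₁ : ℂ) (h1 : ‖l₁‖ = 1) (h2 : l₁.im ≠ 0) :
    {p : ℂ × ℂ × ℝ | 0 < p.2.2 ∧ ∀ lam : ℂ,
      Matrix.det
        !![p.1 * lam - (starRingEnd ℂ) p.1 * lam ^ 2,
            -(p.2.2 : ℂ)⁻¹ + p.2.1 * lam - (p.2.2 : ℂ) * lam ^ 2;
          (p.2.2 : ℂ) * lam - (starRingEnd ℂ) p.2.1 * lam ^ 2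
            + (p.2.2 : ℂ)⁻¹ * lam ^ 3,
            -(p.1 * lam) + (starRingEnd ℂ) p.1 * lam ^ 2] =
      lam * ((lam - l₁) ^ 2 * (lam - (starRingEnd ℂ) l₁) ^ 2)} =
    {(0, l₁ + (starRingEnd ℂ) l₁, 1)} := by
  have hnorm : l₁ * (starRingEnd ℂ) l₁ = 1 := by
    rw [Complex.mul_conj]; norm_cast; rw [← Complex.sq_norm, h1]; norm_num
  have hns : l₁.re * l₁.re + l₁.im * l₁.im = 1 := by
    have := congrArg Complex.re hnorm
    simpa [Complex.mul_re] using this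
  have him2 : 0 < l₁.im * l₁.im := mul_self_pos.mpr h2
  have hR : l₁.re ^ 2 < 1 := by nlinarith
  have hRlt1 : l₁.re < 1 := by nlinarith
  have hRlt2 : -1 < l₁.re := by nlinarith
  ext p
  obtain ⟨a, b, g⟩ := p
  simp only [Set.mem_setOf_eq, Set.mem_singleton_iff, Prod.mk.injEq]
  constructor
  · rintro ⟨hg, hdet⟩
    simp only [Matrix.det_fin_two_of] at hdet
    have hgi : (g : ℂ) * (g : ℂ)⁻¹ = 1 := mul_inv_cancel₀ (by exact_mod_cast hg.ne')
    have e1 := hdet 1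
    have em1 := hdet (-1)
    have e2 := hdet 2
    have em2 := hdet (-2)
    norm_num at e1 em1 e2 em2
    have hc2 : (starRingEnd ℂ) b * (g : ℂ)⁻¹ + b * g + a ^ 2
        = 2 * (l₁ + (starRingEnd ℂ) l₁) := by
      linear_combination 2 * (l₁ + (starRingEnd ℂ) l₁) * hnorm
        - (16 * e1 + 16 * em1 - e2 - em2) / 24
    have hc3 : (g : ℂ) ^ 2 + ((g : ℂ)⁻¹) ^ 2 + b * (starRingEnd ℂ) b
        + 2 * (a * (starRingEnd ℂ) a) = (l₁ + (starRingEnd ℂ) l₁) ^ 2 + 2 := by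
      linear_combination (e2 - em2 - 2 * e1 + 2 * em1) / 12 + 2 * hnorm - 5 * hgi
    rw [← Complex.ofReal_inv] at hc2 hc3
    rw [Complex.ext_iff] at hc2 hc3
    obtain ⟨r2, i2⟩ := hc2
    obtain ⟨r3, _⟩ := hc3
    simp [Complex.add_re, Complex.add_im, Complex.mul_re, Complex.mul_im, pow_two] at r2 i2 r3
    set X := a.re with hXdef
    set Y := a.im with hYdef
    set P := b.re with hPdef
    set Q := b.im with hQdef
    set R := l₁.re with hRdef
    have hggi : g * g⁻¹ = 1 := mul_inv_cancel₀ hg.ne'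
    have hsq : (P * g⁻¹ + P * g + (X * X - Y * Y)) ^ 2 = (2 * (R + R)) ^ 2 := by
      rw [r2]
    have key : 8 * (1 - R) * X ^ 2 + 8 * (1 + R) * Y ^ 2 + (X ^ 2 - Y ^ 2) ^ 2
        + (4 - 4 * R ^ 2) * (g - g⁻¹) ^ 2 + ((g - g⁻¹) ^ 2) ^ 2
        + Q ^ 2 * (g - g⁻¹) ^ 2 + 2 * (X ^ 2 + Y ^ 2) * (g - g⁻¹) ^ 2
        + 4 * Q ^ 2 = 0 := by
      linear_combination (-1 : ℝ) * hsq + (g + g⁻¹) ^ 2 * r3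
        - (-16 * R ^ 2 + 6 * g ^ 2 - 4 * (g * g⁻¹) + 6 * g⁻¹ ^ 2 + 4 * Q ^ 2
            + 8 * X ^ 2 + 8 * Y ^ 2) * hggi
        + 2 * (X ^ 2 - Y ^ 2) * r2
    clear hdet e1 em1 e2 em2 hsq i2 r3
    have h1R : 0 < 1 - R := by linarith
    have h1R' : 0 < 1 + R := by linarith
    have hnn1 : 0 ≤ (4 - 4 * R ^ 2) * (g - g⁻¹) ^ 2 :=
      mul_nonneg (by nlinarith) (sq_nonneg _)
    have hnn2 : 0 ≤ 2 * (X ^ 2 + Y ^ 2) * (g - g⁻¹) ^ 2 :=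
      mul_nonneg (by positivity) (sq_nonneg _)
    have hnn3 : 0 ≤ Q ^ 2 * (g - g⁻¹) ^ 2 := mul_nonneg (sq_nonneg _) (sq_nonneg _)
    have hnn4 : 0 ≤ 8 * (1 + R) * Y ^ 2 := mul_nonneg (by linarith) (sq_nonneg _)
    have hnn5 : 0 ≤ 8 * (1 - R) * X ^ 2 := mul_nonneg (by linarith) (sq_nonneg _)
    have hX : X = 0 := by
      have hkx : 8 * (1 - R) * X ^ 2 ≤ 0 := by linarith [hnn1, hnn2, hnn3, hnn4, sq_nonneg (X ^ 2 - Y ^ 2), sq_nonneg ((g - g⁻¹) ^ 2), sq_nonneg Q]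
      have hx2 : X ^ 2 = 0 := le_antisymm (by nlinarith [hkx, h1R]) (sq_nonneg X)
      exact (pow_eq_zero_iff two_ne_zero).mp hx2
    have hY : Y = 0 := by
      have hky : 8 * (1 + R) * Y ^ 2 ≤ 0 := by linarith [hnn1, hnn2, hnn3, hnn5, sq_nonneg (X ^ 2 - Y ^ 2), sq_nonneg ((g - g⁻¹) ^ 2), sq_nonneg Q]
      have hy2 : Y ^ 2 = 0 := le_antisymm (by nlinarith [hky, h1R']) (sq_nonneg Y)
      exact (pow_eq_zero_iff two_ne_zero).mp hy2
    have hQ : Q = 0 := by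
      have hq2 : Q ^ 2 = 0 := le_antisymm (by linarith [hnn1, hnn2, hnn3, hnn4, hnn5, sq_nonneg (X ^ 2 - Y ^ 2), sq_nonneg ((g - g⁻¹) ^ 2)]) (sq_nonneg Q)
      exact (pow_eq_zero_iff two_ne_zero).mp hq2
    have hd : g - g⁻¹ = 0 := by
      have hd2 : (g - g⁻¹) ^ 2 = 0 := by
        have hle : (4 - 4 * R ^ 2) * (g - g⁻¹) ^ 2 ≤ 0 := by
          linarith [hnn2, hnn3, hnn4, hnn5, sq_nonneg (X ^ 2 - Y ^ 2), sq_nonneg ((g - g⁻¹) ^ 2), sq_nonneg Q]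
        nlinarith [hle, hR, sq_nonneg (g - g⁻¹)]
      exact pow_eq_zero_iff two_ne_zero |>.mp hd2
    have hg1 : g = 1 := by
      have h0 : (g - 1) * (g + 1) = 0 := by
        have hgg : g * g = 1 := by nlinarith [hd, hggi]
        linear_combination hgg
      rcases mul_eq_zero.mp h0 with h | h
      · linarith
      · linarith
    have hP : P = 2 * R := by
      rw [hg1] at r2
      simp [hX, hY] at r2
      linarith
    refine ⟨?_, ?_, hg1⟩
    · exact Complex.ext (by simpa using hX) (by simpa using hY)
    · refine Complex.ext ?_ ?_
      · rw [Complex.add_re, Complex.conj_re, ← hPdef, ← hRdef]; linarith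
      · rw [Complex.add_im, Complex.conj_im, ← hQdef, hQ]; ring
  · rintro ⟨rfl, rfl, rfl⟩
    refine ⟨one_pos, fun lam => ?_⟩
    simp only [Matrix.det_fin_two_of, map_add, Complex.conj_conj, map_zero,
      Complex.ofReal_one, inv_one]
    linear_combination (-(lam * (1 + l₁ * (starRingEnd ℂ) l₁))
      + 2 * lam ^ 2 * (l₁ + (starRingEnd ℂ) l₁) - 2 * lam ^ 3) * hnorm
end

section
/- Let ℘, ζ, be the Weierstrass functions for the degenerate lattice with ω = ∞, ω' = πi/2, so that ℘(z) = 1/3 + 1/sinh²(z) and ζ(z) = -z/3 + coth(z). Then with z₊ = πi/4 + t for t ∈ ℝ, the quantity τ̃ = (2η'z₊ - 2ω'ζ(z₊))/(πi) with η' = -πi/6 equals (i - tanh t)/(1 - i·tanh t); in particular |τ̃| = 1. -/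
open Complex Real

/-- In the degenerate limit, with `ζ(z) = -z/3 + coth z`, `ω' = πi/2`,
`η' = -πi/6` and `z₊ = πi/4 + t`, the modulus
`τ̃ = (2η'z₊ - 2ω'ζ(z₊))/(πi)` equals `(i - tanh t)/(1 - i·tanh t)`, which lies
on the unit circle. -/
theorem stmt_16 (t : ℝ) :
    (let zp : ℂ := Real.pi * Complex.I / 4 + t
     (2 * (-(Real.pi * Complex.I / 6)) * zp -
        2 * (Real.pi * Complex.I / 2) *
          (-zp / 3 + Complex.cosh zp / Complex.sinh zp)) /
        (Real.pi * Complex.I) =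
      (Complex.I - Real.tanh t) / (1 - Complex.I * Real.tanh t)) ∧
    ‖(Complex.I - Real.tanh t) / (1 - Complex.I * Real.tanh t)‖ = 1 := by
  set c : ℝ := Real.cosh t with hc
  set s : ℝ := Real.sinh t with hs
  have hcpos : 0 < c := Real.cosh_pos t
  have hzp : (Real.pi * Complex.I / 4 + t : ℂ) = (Real.pi/4 : ℝ) * Complex.I + (t : ℝ) := by
    push_cast; ring
  have hsinh : Complex.sinh (Real.pi * Complex.I / 4 + t) =
      (Real.sqrt 2 / 2 : ℝ) * ((s : ℂ) + Complex.I * c) := by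
    rw [hzp, Complex.sinh_add, Complex.sinh_mul_I, Complex.cosh_mul_I,
      ← Complex.ofReal_sin, ← Complex.ofReal_cos, Real.sin_pi_div_four, Real.cos_pi_div_four,
      ← Complex.ofReal_cosh, ← Complex.ofReal_sinh, ← hc, ← hs]
    push_cast; ring
  have hcosh : Complex.cosh (Real.pi * Complex.I / 4 + t) =
      (Real.sqrt 2 / 2 : ℝ) * ((c : ℂ) + Complex.I * s) := by
    rw [hzp, Complex.cosh_add, Complex.sinh_mul_I, Complex.cosh_mul_I,
      ← Complex.ofReal_sin, ← Complex.ofReal_cos, Real.sin_pi_div_four, Real.cos_pi_div_four,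
      ← Complex.ofReal_cosh, ← Complex.ofReal_sinh, ← hc, ← hs]
    push_cast; ring
  have hsqrt2 : (Real.sqrt 2 / 2 : ℝ) ≠ 0 := by positivity
  have hsc : ((s : ℂ) + Complex.I * c) ≠ 0 := by
    intro h
    have := congrArg Complex.im h
    simp at this
    exact hcpos.ne' this
  have hsnz : Complex.sinh (Real.pi * Complex.I / 4 + t) ≠ 0 := by
    rw [hsinh]
    exact mul_ne_zero (by exact_mod_cast hsqrt2) hsc
  have htanh : (Real.tanh t : ℂ) = (s : ℂ) / c := by
    rw [Real.tanh_eq_sinh_div_cosh, Complex.ofReal_div]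
  have hden : (1 : ℂ) - Complex.I * Real.tanh t ≠ 0 := by
    intro h
    have := congrArg Complex.re h
    simp at this
  have hpi : (Real.pi : ℂ) ≠ 0 := by exact_mod_cast Real.pi_ne_zero
  constructor
  · show (2 * (-(Real.pi * Complex.I / 6)) * (Real.pi * Complex.I / 4 + t) -
        2 * (Real.pi * Complex.I / 2) *
          (-(Real.pi * Complex.I / 4 + t) / 3 +
            Complex.cosh (Real.pi * Complex.I / 4 + t) / Complex.sinh (Real.pi * Complex.I / 4 + t))) /
        (Real.pi * Complex.I) =
      (Complex.I - Real.tanh t) / (1 - Complex.I * Real.tanh t)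
    have hpiI : (Real.pi : ℂ) * Complex.I ≠ 0 := mul_ne_zero hpi Complex.I_ne_zero
    have hA : ∀ K : ℂ, (2 * (-((Real.pi:ℂ) * Complex.I / 6)) * ((Real.pi:ℂ) * Complex.I / 4 + t) -
        2 * ((Real.pi:ℂ) * Complex.I / 2) *
          (-((Real.pi:ℂ) * Complex.I / 4 + t) / 3 + K)) / ((Real.pi:ℂ) * Complex.I) = -K := by
      intro K; field_simp; ring
    rw [hA, hsinh, hcosh, htanh]
    have hcne : (c : ℂ) ≠ 0 := by exact_mod_cast hcpos.ne'
    have hsq2c : ((Real.sqrt 2 / 2 : ℝ) : ℂ) ≠ 0 := by exact_mod_cast hsqrt2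
    have hden' : (1 : ℂ) - Complex.I * ((s : ℂ)/c) ≠ 0 := by rw [← htanh]; exact hden
    rw [mul_div_mul_left _ _ hsq2c, ← neg_div, div_eq_div_iff hsc hden']
    field_simp
    ring_nf
    simp [Complex.I_sq]
    ring_nf
  · rw [norm_div]
    have habs : ‖Complex.I - Real.tanh t‖ = ‖1 - Complex.I * Real.tanh t‖ := by
      simp [Complex.norm_def, Complex.normSq_apply]
      ring_nf
    rw [habs, div_self]
    exact (norm_ne_zero_iff.mpr hden)
end
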